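/- For the weight ω(Z) = exp(−(Re Z)²/(1+τ) − (Im Z)²/(1−τ)) and F(τ; z, z'; s) as above with z = Z/√(2τ), z' = conj(Z')/√(2τ), the following holds for all n ≥ 1 and Z, Z' ∈ ℂ: |√(ω(√n Z)ω(√n Z'))·e^{nF(τ)}| = exp(−(n/2)|Z−Z'|²/(1−τ²)). -/

import Mathlib

/-- The elliptic Ginibre weight. -/
noncomputable def wfun (τ : ℝ) (Z : ℂ) : ℝ :=
  Real.exp (-(Z.re) ^ 2 / (1 + τ) - (Z.im) ^ 2 / (1 - τ))

lemma sqrt_exp' (t : ℝ) : Real.sqrt (Real.exp t) = Real.exp (t / 2) := by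
  rw [show Real.exp t = Real.exp (t / 2) ^ 2 by
    rw [sq, ← Real.exp_add]; ring_nf]
  exact Real.sqrt_sq (Real.exp_nonneg _)

set_option maxHeartbeats 1000000 in
theorem weight_times_eFtau_abs (τ : ℝ) (hτ0 : 0 < τ) (hτ1 : τ < 1)
    (n : ℕ) (hn : 1 ≤ n) (Z Z' : ℂ) :
    let z : ℂ := Z / (Real.sqrt (2 * τ) : ℂ)
    let z' : ℂ := (starRingEnd ℂ) Z' / (Real.sqrt (2 * τ) : ℂ)
    let Fτ : ℂ := (τ : ℂ) * (z + z') ^ 2 / (2 * (1 + (τ : ℂ)))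
      - (τ : ℂ) * (z - z') ^ 2 / (2 * (1 - (τ : ℂ)))
    Real.sqrt (wfun τ ((Real.sqrt n : ℂ) * Z) * wfun τ ((Real.sqrt n : ℂ) * Z'))
        * ‖Complex.exp ((n : ℂ) * Fτ)‖
      = Real.exp (-((n : ℝ) / 2) * ‖Z - Z'‖ ^ 2 / (1 - τ ^ 2)) := by
  intro z z' Fτ
  have h1 : (0:ℝ) < 1 + τ := by linarith
  have h2 : (0:ℝ) < 1 - τ := by linarith
  have h3 : (0:ℝ) < 1 - τ^2 := by nlinarith
  have hs : (Real.sqrt (2*τ))^2 = 2*τ := Real.sq_sqrt (by linarith)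
  have hsn : (Real.sqrt n)^2 = (n:ℝ) := Real.sq_sqrt (by positivity)
  have hsC2 : ((Real.sqrt (2*τ) : ℝ) : ℂ)^2 = 2*(τ:ℂ) := by
    rw [← Complex.ofReal_pow, hs]; push_cast; ring
  have hsC0 : ((Real.sqrt (2*τ) : ℝ) : ℂ) ≠ 0 := by
    simp [Real.sqrt_ne_zero', hτ0]
  set c : ℂ := (starRingEnd ℂ) Z' with hc
  have hF : Fτ = (Z + c)^2 / ((4*(1+τ) : ℝ) : ℂ) - (Z - c)^2 / ((4*(1-τ) : ℝ) : ℂ) := by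
    have e1 : z + z' = (Z + c) / ((Real.sqrt (2*τ) : ℝ) : ℂ) := by
      simp only [z, z', ← add_div, hc]
    have e2 : z - z' = (Z - c) / ((Real.sqrt (2*τ) : ℝ) : ℂ) := by
      simp only [z, z', ← sub_div, hc]
    have hp : (1 + (τ:ℂ)) ≠ 0 := by
      rw [show 1 + (τ:ℂ) = ((1+τ:ℝ):ℂ) by push_cast; ring]
      exact_mod_cast Complex.ofReal_ne_zero.mpr (ne_of_gt h1)
    have hm : (1 - (τ:ℂ)) ≠ 0 := by
      rw [show 1 - (τ:ℂ) = ((1-τ:ℝ):ℂ) by push_cast; ring]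
      exact_mod_cast Complex.ofReal_ne_zero.mpr (ne_of_gt h2)
    have hτC : (τ:ℂ) ≠ 0 := Complex.ofReal_ne_zero.mpr (ne_of_gt hτ0)
    simp only [Fτ, e1, e2, div_pow, hsC2]
    push_cast
    field_simp
    ring
  rw [wfun, wfun, ← Real.exp_add, sqrt_exp', Complex.norm_exp, ← Real.exp_add]
  congr 1
  have hre : ((n:ℂ) * Fτ).re = (n:ℝ) * (((Z+c)^2).re / (4*(1+τ)) - ((Z-c)^2).re / (4*(1-τ))) := by
    rw [hF]
    simp only [Complex.mul_re, Complex.natCast_re, Complex.natCast_im, Complex.sub_re,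
      Complex.sub_im, Complex.div_ofReal_re, Complex.div_ofReal_im]
    ring
  rw [hre, Complex.sq_norm]
  simp only [Complex.mul_re, Complex.mul_im, Complex.add_re, Complex.add_im, Complex.sub_re,
    Complex.sub_im, Complex.ofReal_re, Complex.ofReal_im, Complex.normSq_apply, hc,
    Complex.conj_re, Complex.conj_im, pow_two]
  have hx : ∀ a b : ℝ, Real.sqrt n * a * (Real.sqrt n * b) = (n:ℝ) * (a * b) := by
    intro a b
    have : Real.sqrt n * Real.sqrt n = (n:ℝ) := by nlinarith [hsn]
    calc Real.sqrt n * a * (Real.sqrt n * b) = (Real.sqrt n * Real.sqrt n) * (a*b) := by ring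
    _ = (n:ℝ) * (a*b) := by rw [this]
  simp only [zero_mul, mul_zero, sub_zero, add_zero, neg_zero]
  simp only [hx]
  have h3' : (1 - τ * τ) ≠ 0 := by nlinarith
  field_simp
  ring
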